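/- Let C ⊆ End_{F_q}(F_{q^n}) be an additive subgroup such that every nonzero element of C has rank at least d. Then |C| ≤ q^{n(n-d+1)} (the Singleton-like bound for rank metric codes). -/

import Mathlib

/-- Singleton-like bound: an additive `d`-code `C ⊆ End_{F_q}(F_{qⁿ})` satisfies
`|C| ≤ q^(n(n-d+1))`. -/
theorem stmt_11 (q n d : ℕ) (hq : IsPrimePow q) (hd1 : 1 ≤ d) (hdn : d ≤ n)
    (K F : Type) [Field K] [Fintype K] [Field F] [Fintype F] [Algebra K F]
    (hK : Fintype.card K = q) (hF : Fintype.card F = q ^ n)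
    (C : AddSubgroup (F →ₗ[K] F))
    (hC : ∀ f ∈ C, f ≠ 0 → d ≤ Module.finrank K (LinearMap.range f)) :
    Nat.card C ≤ q ^ (n * (n - d + 1)) := by
  classical
  have hq2 : 2 ≤ q := hq.two_le
  have hfin : Module.finrank K F = n := by
    have h := Module.card_eq_pow_finrank (K := K) (V := F)
    rw [hK, hF] at h
    exact (Nat.pow_right_injective hq2 h.symm)
  set m := n - d + 1 with hm
  have hmn : m ≤ n := by omega
  let b : Module.Basis (Fin n) K F := (Module.finBasis K F).reindex (finCongr hfin)
  have li : LinearIndependent K (b ∘ Fin.castLE hmn) :=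
    b.linearIndependent.comp _ (Fin.castLE_injective hmn)
  set U : Submodule K F := Submodule.span K (Set.range (b ∘ Fin.castLE hmn)) with hU
  let bU : Module.Basis (Fin m) K U := Module.Basis.span li
  have hUrank : Module.finrank K U = m := by
    rw [Module.finrank_eq_card_basis bU, Fintype.card_fin]
  -- key: any f ∈ C vanishing on U is 0
  have key : ∀ f ∈ C, (f.domRestrict U = 0) → f = 0 := by
    intro f hf h0
    by_contra hne
    have hd := hC f hf hne
    have hUker : U ≤ LinearMap.ker f := by
      intro x hx
      have : f.domRestrict U ⟨x, hx⟩ = 0 := by rw [h0]; rfl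
      simpa [LinearMap.domRestrict_apply] using this
    have h1 : Module.finrank K U ≤ Module.finrank K (LinearMap.ker f) :=
      Submodule.finrank_mono hUker
    have h2 := LinearMap.finrank_range_add_finrank_ker f
    rw [hfin] at h2
    omega
  -- injective map into U →ₗ F
  have hinj : Function.Injective (fun f : C => (f : F →ₗ[K] F).domRestrict U) := by
    intro f g hfg
    have hmem : (f : F →ₗ[K] F) - g ∈ C := sub_mem f.2 g.2
    have : ((f : F →ₗ[K] F) - g).domRestrict U = 0 := by
      ext x
      have := congrFun (congrArg DFunLike.coe hfg) x
      simp [LinearMap.domRestrict_apply] at this ⊢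
      simp [this]
    have := key _ hmem this
    exact Subtype.ext (sub_eq_zero.mp this)
  haveI : Fintype (U →ₗ[K] F) :=
    Fintype.ofEquiv _ (LinearMap.toMatrix bU b).toEquiv.symm
  have hcard : Nat.card C ≤ Nat.card (U →ₗ[K] F) := Nat.card_le_card_of_injective _ hinj
  have hcard2 : Nat.card (U →ₗ[K] F) = q ^ (n * m) := by
    rw [Nat.card_eq_fintype_card, Module.card_eq_pow_finrank (K := K) (V := U →ₗ[K] F),
      hK, Module.finrank_linearMap, hUrank, hfin, Nat.mul_comm]
  rw [← hm] at *
  omega
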